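/- arXiv:1806.05702 — 2 statements merged into one kernel-verified Lean document; each statement's English description precedes it below -/
import Mathlib

section
/- Let H ∈ (0,1), x ∈ 𝔛^H, n ∈ ℕ, and 0 ≤ k < 2^n. Then x((k+1)2^{−n}) − x(k2^{−n}) = 2^{−n} Σ_{m=0}^{n−1} 2^{m(1−H)} σ_{m,k} for some signs σ_{m,k} ∈ {−1,+1}. Moreover, as k ranges over {0,…,2^n−1}, the sign vector (σ_{0,k},…,σ_{n−1,k}) runs through all of {−1,+1}^n, each element appearing exactly once. -/
open Filter Finset Set MeasureTheory ProbabilityTheory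

noncomputable def e00 (t : ℝ) : ℝ := max (min t (1 - t)) 0

noncomputable def fs (m : ℕ) (k : ℤ) (t : ℝ) : ℝ :=
  (2 : ℝ) ^ (-(m : ℝ) / 2) * e00 ((2 : ℝ) ^ m * t - (k : ℝ))

def IsSign (θ : ℕ → ℕ → ℝ) : Prop := ∀ m k, θ m k = 1 ∨ θ m k = -1

noncomputable def tlTerm (H : ℝ) (θ : ℕ → ℕ → ℝ) (m : ℕ) (t : ℝ) : ℝ :=
  (2 : ℝ) ^ ((m : ℝ) * (1 / 2 - H)) *
    ∑ k ∈ Finset.range (2 ^ m), θ m k * fs m (k : ℤ) t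

noncomputable def sPartial (H : ℝ) (θ : ℕ → ℕ → ℝ) (n : ℕ) (t : ℝ) : ℝ :=
  ∑ m ∈ Finset.range n, tlTerm H θ m t

def MemX (H : ℝ) (x : ℝ → ℝ) : Prop :=
  ∃ θ : ℕ → ℕ → ℝ, IsSign θ ∧ ∀ t : ℝ, x t = ∑' m : ℕ, tlTerm H θ m t

noncomputable def xTL (H : ℝ) (t : ℝ) : ℝ := ∑' m : ℕ, tlTerm H (fun _ _ => 1) m t

noncomputable def dyadicSum (p : ℝ) (x : ℝ → ℝ) (n : ℕ) (t : ℝ) : ℝ :=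
  ∑ k ∈ Finset.range (2 ^ n),
    if (k : ℝ) / 2 ^ n ≤ t then |x (((k : ℝ) + 1) / 2 ^ n) - x ((k : ℝ) / 2 ^ n)| ^ p else 0

noncomputable def nuFloor (h : ℝ) : ℤ := ⌊-(Real.logb 2 h)⌋

noncomputable def omegaH (H h : ℝ) : ℝ :=
  h * (2 : ℝ) ^ (((nuFloor h : ℝ) - 1) * (1 - H)) / ((2 : ℝ) ^ (1 - H) - 1) +
    (2 : ℝ) ^ ((1 - (nuFloor h : ℝ)) * H) / (3 * (1 - (2 : ℝ) ^ (-H)))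

lemma e00_of_nonpos {u : ℝ} (h : u ≤ 0) : e00 u = 0 := by
  unfold e00; rw [max_eq_right]; exact le_trans (min_le_left _ _) h

lemma e00_of_one_le {u : ℝ} (h : 1 ≤ u) : e00 u = 0 := by
  unfold e00; rw [max_eq_right]; exact le_trans (min_le_right _ _) (by linarith)

lemma e00_int (z : ℤ) : e00 (z : ℝ) = 0 := by
  rcases le_or_gt z 0 with h | h
  · exact e00_of_nonpos (by exact_mod_cast h)
  · exact e00_of_one_le (by exact_mod_cast h)

lemma e00_left {u : ℝ} (h0 : 0 ≤ u) (h : u ≤ 1/2) : e00 u = u := by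
  unfold e00; rw [min_eq_left (by linarith), max_eq_left h0]

lemma e00_right {u : ℝ} (h : 1/2 ≤ u) (h1 : u ≤ 1) : e00 u = 1 - u := by
  unfold e00; rw [min_eq_right (by linarith), max_eq_left (by linarith)]

lemma fs_incr (m n k ℓ : ℕ) (hmn : m < n) (hk : k < 2^n) (hℓ : ℓ < 2^m) :
    fs m (ℓ:ℤ) (((k:ℝ)+1)/2^n) - fs m (ℓ:ℤ) ((k:ℝ)/2^n)
    = if ℓ = k / 2^(n-m) then
        2^(-(m:ℝ)/2) * ((if (k / 2^(n-m-1)) % 2 = 0 then (1:ℝ) else -1) * ((2:ℝ)^m / 2^n))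
      else 0 := by
  set d := n - m with hdd
  have hd1 : 1 ≤ d := by omega
  have hnm : n = m + d := by omega
  set ℓ₀ := k / 2^d with hl0
  set r := k % 2^d with hrr
  have hkr : ℓ₀ * 2^d + r = k := by rw [mul_comm]; exact Nat.div_add_mod k (2^d)
  have hr : r < 2^d := Nat.mod_lt _ (by positivity)
  have hdsplit : 2^d = 2^(d-1) * 2 := by
    rw [← pow_succ]; congr 1; omega
  have h2d : (2:ℝ)^n = 2^m * 2^d := by rw [hnm, pow_add]
  have h2dpos : (0:ℝ) < 2^d := by positivity
  have h2npos : (0:ℝ) < 2^n := by positivity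
  have hkR : (k:ℝ) = ℓ₀ * 2^d + r := by exact_mod_cast congrArg (Nat.cast : ℕ → ℝ) hkr.symm
  have harg1 : (2:ℝ)^m * ((k:ℝ)/2^n) - (ℓ₀:ℝ) = (r:ℝ)/2^d := by
    rw [h2d, hkR]; push_cast; field_simp; ring
  have harg2 : (2:ℝ)^m * (((k:ℝ)+1)/2^n) - (ℓ₀:ℝ) = ((r:ℝ)+1)/2^d := by
    rw [h2d, hkR]; push_cast; field_simp; ring
  have hdiv : k / 2^(d-1) = 2 * ℓ₀ + r / 2^(d-1) := by
    rw [← hkr, hdsplit]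
    rw [show ℓ₀ * (2^(d-1) * 2) + r = 2^(d-1) * (2 * ℓ₀) + r by ring]
    rw [Nat.mul_add_div (by positivity)]
  have hrd : r / 2^(d-1) < 2 := by
    apply Nat.div_lt_iff_lt_mul (by positivity) |>.mpr
    omega
  have hbit : (k / 2^(d-1)) % 2 = 0 ↔ r < 2^(d-1) := by
    rw [hdiv]
    rcases Nat.lt_or_ge r (2^(d-1)) with h | h
    · simp [Nat.div_eq_of_lt h, h]
    · have : r / 2^(d-1) = 1 := by
        have := Nat.div_le_div_right (c := 2^(d-1)) h
        rw [Nat.div_self (by positivity)] at this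
        omega
      rw [this]; omega
  have hnmd1 : n - m - 1 = d - 1 := by omega
  rw [hnmd1]
  by_cases hcase : ℓ = ℓ₀
  · subst hcase
    rw [if_pos rfl]
    unfold fs
    push_cast
    rw [show (2:ℝ)^m * (((k:ℝ)+1)/2^n) - (ℓ₀:ℝ) = ((r:ℝ)+1)/2^d from harg2,
        show (2:ℝ)^m * ((k:ℝ)/2^n) - (ℓ₀:ℝ) = (r:ℝ)/2^d from harg1]
    have h2m : (2:ℝ)^m / 2^n = 1 / 2^d := by rw [h2d]; field_simp
    rw [h2m]
    have hrRlt : (r:ℝ) < 2^d := by exact_mod_cast hr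
    have hhalf : (2:ℝ)^d = 2^(d-1) * 2 := by exact_mod_cast congrArg (Nat.cast : ℕ → ℝ) hdsplit
    by_cases hb : r < 2^(d-1)
    · rw [if_pos (hbit.mpr hb)]
      have hrb : (r:ℝ) + 1 ≤ 2^(d-1) := by exact_mod_cast hb
      rw [e00_left (by positivity) (by rw [div_le_iff₀ h2dpos, hhalf]; nlinarith),
          e00_left (by positivity) (by rw [div_le_iff₀ h2dpos, hhalf]; nlinarith)]
      field_simp
      ring
    · rw [if_neg (fun h => hb (hbit.mp h))]
      have hrb : (2:ℝ)^(d-1) ≤ r := by exact_mod_cast Nat.le_of_not_lt hb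
      have hrb2 : (r:ℝ) + 1 ≤ 2^d := by exact_mod_cast hr
      rw [e00_right (by rw [le_div_iff₀ h2dpos, hhalf]; nlinarith) (by rw [div_le_iff₀ h2dpos]; linarith),
          e00_right (by rw [le_div_iff₀ h2dpos, hhalf]; nlinarith) (by rw [div_le_iff₀ h2dpos]; linarith)]
      field_simp
      ring
  · rw [if_neg hcase]
    unfold fs
    have hrd0 : (0:ℝ) ≤ (r:ℝ)/2^d := by positivity
    have hrd1 : (r:ℝ)/2^d < 1 := by rw [div_lt_one h2dpos]; exact_mod_cast hr
    have hrd1' : ((r:ℝ)+1)/2^d ≤ 1 := by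
      rw [div_le_one h2dpos]; exact_mod_cast hr
    have hrd0' : (0:ℝ) < ((r:ℝ)+1)/2^d := by positivity
    rcases Nat.lt_or_ge ℓ ℓ₀ with h | h
    · have hle : (ℓ:ℝ) + 1 ≤ ℓ₀ := by exact_mod_cast h
      have z1 : e00 ((2:ℝ)^m * (((k:ℝ)+1)/2^n) - (((ℓ:ℤ)):ℝ)) = 0 := by
        push_cast
        exact e00_of_one_le (by linarith [harg2])
      have z2 : e00 ((2:ℝ)^m * (((k:ℝ))/2^n) - (((ℓ:ℤ)):ℝ)) = 0 := by
        push_cast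
        exact e00_of_one_le (by linarith [harg1])
      rw [z1, z2]; ring
    · have h' : ℓ₀ < ℓ := lt_of_le_of_ne h (fun h => hcase h.symm)
      have hle : (ℓ₀:ℝ) + 1 ≤ ℓ := by exact_mod_cast h'
      have z1 : e00 ((2:ℝ)^m * (((k:ℝ)+1)/2^n) - (((ℓ:ℤ)):ℝ)) = 0 := by
        push_cast
        exact e00_of_nonpos (by linarith [harg2])
      have z2 : e00 ((2:ℝ)^m * (((k:ℝ))/2^n) - (((ℓ:ℤ)):ℝ)) = 0 := by
        push_cast
        exact e00_of_nonpos (by linarith [harg1])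
      rw [z1, z2]; ring

lemma tl_vanish (H : ℝ) (θ : ℕ → ℕ → ℝ) (m n k : ℕ) (hmn : n ≤ m) :
    tlTerm H θ m ((k:ℝ)/2^n) = 0 := by
  unfold tlTerm
  rw [Finset.sum_eq_zero, mul_zero]
  intro ℓ _
  have harg : (2:ℝ)^m * ((k:ℝ)/2^n) - ((ℓ:ℤ):ℝ) = (((k * 2^(m-n) : ℕ) : ℤ) - (ℓ:ℤ) : ℤ) := by
    have : (2:ℝ)^m = 2^n * 2^(m-n) := by
      rw [← pow_add]; congr 1; omega
    rw [this]
    push_cast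
    have h2npos : (0:ℝ) < 2^n := by positivity
    field_simp
  unfold fs
  rw [harg, e00_int, mul_zero, mul_zero]

lemma tl_incr (H : ℝ) (θ : ℕ → ℕ → ℝ) (m n k : ℕ) (hmn : m < n) (hk : k < 2^n) :
    tlTerm H θ m (((k:ℝ)+1)/2^n) - tlTerm H θ m ((k:ℝ)/2^n)
    = 2^(-(n:ℝ)) * ((2:ℝ)^((m:ℝ)*(1-H)) *
        (θ m (k / 2^(n-m)) * (if (k / 2^(n-m-1)) % 2 = 0 then (1:ℝ) else -1))) := by
  unfold tlTerm
  rw [← mul_sub, ← Finset.sum_sub_distrib]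
  have hsum : ∑ ℓ ∈ Finset.range (2^m), (θ m ℓ * fs m (ℓ:ℤ) (((k:ℝ)+1)/2^n) - θ m ℓ * fs m (ℓ:ℤ) ((k:ℝ)/2^n))
      = θ m (k / 2^(n-m)) * (2^(-(m:ℝ)/2) * ((if (k / 2^(n-m-1)) % 2 = 0 then (1:ℝ) else -1) * ((2:ℝ)^m / 2^n))) := by
    rw [Finset.sum_congr rfl (fun ℓ hℓ => by
      rw [← mul_sub, fs_incr m n k ℓ hmn hk (Finset.mem_range.mp hℓ)])]
    simp only [mul_ite, mul_zero]
    rw [Finset.sum_ite_eq' (Finset.range (2^m)) (k / 2^(n-m))]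
    rw [if_pos (Finset.mem_range.mpr ?_)]
    rw [Nat.div_lt_iff_lt_mul (by positivity)]
    calc k < 2^n := hk
      _ = 2^(n-m) * 2^m := by rw [← pow_add]; congr 1; omega
      _ = 2^m * 2^(n-m) := by ring
  rw [hsum]
  have hpow : (2:ℝ)^((m:ℝ)*(1/2-H)) * ((2:ℝ)^(-(m:ℝ)/2) * ((2:ℝ)^m / 2^n)) = 2^(-(n:ℝ)) * 2^((m:ℝ)*(1-H)) := by
    rw [← Real.rpow_natCast 2 m, ← Real.rpow_natCast 2 n,
        ← Real.rpow_sub (by norm_num : (0:ℝ) < 2),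
        ← Real.rpow_add (by norm_num : (0:ℝ) < 2), ← Real.rpow_add (by norm_num : (0:ℝ) < 2),
        ← Real.rpow_add (by norm_num : (0:ℝ) < 2)]
    congr 1
    ring
  linear_combination (θ m (k / 2^(n-m)) * (if (k / 2^(n-m-1)) % 2 = 0 then (1:ℝ) else -1)) * hpow

theorem stmt13 (H : ℝ) (hH : H ∈ Set.Ioo (0:ℝ) 1) (x : ℝ → ℝ) (hx : MemX H x) (n : ℕ) :
    ∃ σ : ℕ → ℕ → ℝ, (∀ m k, σ m k = 1 ∨ σ m k = -1) ∧
      (∀ k : ℕ, k < 2 ^ n → x (((k : ℝ) + 1) / 2 ^ n) - x ((k : ℝ) / 2 ^ n)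
        = 2 ^ (-(n : ℝ)) * ∑ m ∈ Finset.range n, (2:ℝ) ^ ((m:ℝ) * (1 - H)) * σ m k) ∧
      (∀ ε : Fin n → ℝ, (∀ m, ε m = 1 ∨ ε m = -1) →
        ∃! k : Fin (2 ^ n), ∀ m : Fin n, σ (m : ℕ) (k : ℕ) = ε m) := by
  classical
  obtain ⟨θ, hθ, hθ2⟩ := hx
  set σ : ℕ → ℕ → ℝ := fun m k =>
    if m < n then θ m (k / 2^(n-m)) * (if (k / 2^(n-m-1)) % 2 = 0 then (1:ℝ) else -1) else 1
    with hσdef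
  have hsgn : ∀ m k, σ m k = 1 ∨ σ m k = -1 := by
    intro m k
    rw [hσdef]
    dsimp only
    split
    · rcases hθ m (k / 2^(n-m)) with h | h <;> rw [h] <;> split <;> norm_num
    · left; rfl
  refine ⟨σ, hsgn, ?_, ?_⟩
  · intro k hk
    have hxv : ∀ j : ℕ, x ((j:ℝ)/2^n) = ∑ m ∈ Finset.range n, tlTerm H θ m ((j:ℝ)/2^n) := by
      intro j
      rw [hθ2]
      exact tsum_eq_sum (fun m hm =>
        tl_vanish H θ m n j (Nat.le_of_not_lt (fun h => hm (Finset.mem_range.mpr h))))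
    have h1 : x (((k:ℝ)+1)/2^n) = ∑ m ∈ Finset.range n, tlTerm H θ m (((k:ℝ)+1)/2^n) := by
      have := hxv (k+1); push_cast at this; exact this
    rw [h1, hxv k, ← Finset.sum_sub_distrib, Finset.mul_sum]
    refine Finset.sum_congr rfl (fun m hm => ?_)
    have hmn : m < n := Finset.mem_range.mp hm
    rw [tl_incr H θ m n k hmn hk, hσdef]
    dsimp only
    rw [if_pos hmn]
  · intro ε hε
    set f : Fin (2^n) → (Fin n → ℝ) := fun k m => σ (m:ℕ) (k:ℕ) with hf
    have hinj : Function.Injective f := by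
      intro a b hab
      have hbits : ∀ i, i ≤ n → (a:ℕ)/2^(n-i) = (b:ℕ)/2^(n-i) := by
        intro i
        induction i with
        | zero =>
          intro _
          simp only [Nat.sub_zero]
          rw [Nat.div_eq_of_lt a.isLt, Nat.div_eq_of_lt b.isLt]
        | succ i ih =>
          intro hi
          have hih := ih (by omega)
          have hσeq : σ i (a:ℕ) = σ i (b:ℕ) := by
            have := congrFun hab ⟨i, by omega⟩
            simpa [hf] using this
          rw [hσdef] at hσeq
          simp only [if_pos (show i < n by omega)] at hσeq
          rw [hih] at hσeq
          have hθne : θ i ((b:ℕ)/2^(n-i)) ≠ 0 := by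
            rcases hθ i ((b:ℕ)/2^(n-i)) with h | h <;> rw [h] <;> norm_num
          have hs := mul_left_cancel₀ hθne hσeq
          have hb : ((a:ℕ)/2^(n-i-1))%2 = ((b:ℕ)/2^(n-i-1))%2 := by
            by_cases hc : ((a:ℕ)/2^(n-i-1))%2 = 0 <;> by_cases hc' : ((b:ℕ)/2^(n-i-1))%2 = 0
            · omega
            · rw [if_pos hc, if_neg hc'] at hs; norm_num at hs
            · rw [if_neg hc, if_pos hc'] at hs; norm_num at hs
            · omega
          have hps : 2^(n-i-1) * 2 = 2^(n-i) := by
            rw [← pow_succ]; congr 1; omega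
          have e1 : (a:ℕ)/2^(n-i-1)/2 = (a:ℕ)/2^(n-i) := by
            rw [Nat.div_div_eq_div_mul, hps]
          have e2 : (b:ℕ)/2^(n-i-1)/2 = (b:ℕ)/2^(n-i) := by
            rw [Nat.div_div_eq_div_mul, hps]
          have hni : n - (i+1) = n - i - 1 := by omega
          rw [hni]
          omega
      have := hbits n le_rfl
      simp only [Nat.sub_self, pow_zero, Nat.div_one] at this
      exact Fin.ext this
    set S : Finset (Fin n → ℝ) := Fintype.piFinset (fun _ => ({1, -1} : Finset ℝ)) with hS
    have hmem : ∀ g : Fin n → ℝ, g ∈ S ↔ ∀ m, g m = 1 ∨ g m = -1 := by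
      intro g
      rw [hS, Fintype.mem_piFinset]
      simp
    have hfS : ∀ a : Fin (2^n), f a ∈ S := fun a => (hmem _).mpr (fun m => hsgn _ _)
    have hcard : S.card = 2^n := by
      rw [hS, Fintype.card_piFinset]
      have : ({1, -1} : Finset ℝ).card = 2 := by norm_num
      simp [this]
    have himage : Finset.image f Finset.univ = S := by
      apply Finset.eq_of_subset_of_card_le
      · intro g hg
        obtain ⟨a, _, rfl⟩ := Finset.mem_image.mp hg
        exact hfS a
      · rw [Finset.card_image_of_injective _ hinj, Finset.card_univ, Fintype.card_fin, hcard]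
    have hεS : ε ∈ S := (hmem ε).mpr hε
    rw [← himage] at hεS
    obtain ⟨a, -, ha⟩ := Finset.mem_image.mp hεS
    refine ⟨a, fun m => congrFun ha m, fun b hb => hinj ?_⟩
    rw [ha]
    funext m
    exact hb m
end

section
/- Let H ∈ (0,1), x ∈ 𝔛^H, and p > 1/H. Then for all t ∈ (0,1], lim_{n→∞} Σ_{s ∈ 𝕋_n, s ≤ t} |x(s′) − x(s)|^p = 0. -/
open Filter Finset Set MeasureTheory ProbabilityTheory

lemma e00_nonneg (t : ℝ) : 0 ≤ e00 t := le_max_right _ _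

lemma e00_le_half (t : ℝ) : e00 t ≤ 1/2 := by
  unfold e00
  rcases le_total t (1/2) with h | h
  · exact max_le (le_trans (min_le_left _ _) h) (by norm_num)
  · exact max_le (le_trans (min_le_right _ _) (by linarith)) (by norm_num)

lemma e00_lip (a b : ℝ) : |e00 a - e00 b| ≤ |a - b| := by
  unfold e00
  refine le_trans (abs_max_sub_max_le_abs _ _ _) ?_
  refine le_trans (abs_min_sub_min_le_max _ _ _ _) ?_
  apply max_le le_rfl
  rw [show (1 - a) - (1 - b) = -(a - b) by ring, abs_neg]

lemma e00_eq_zero {t : ℝ} (h : t ≤ 0 ∨ 1 ≤ t) : e00 t = 0 := by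
  unfold e00
  rcases h with h | h
  · exact max_eq_right (le_trans (min_le_left _ _) h)
  · exact max_eq_right (le_trans (min_le_right _ _) (by linarith))

lemma abs_sum_tent_le (c : ℕ → ℝ) (hc : ∀ k, |c k| ≤ 1) (N : ℕ) (u : ℝ) :
    |∑ k ∈ Finset.range N, c k * e00 (u - k)| ≤ 1/2 := by
  set j := ⌊u⌋.toNat with hj
  have hz : ∀ k : ℕ, k ≠ j → e00 (u - k) = 0 := by
    intro k hk
    apply e00_eq_zero
    by_contra hcon
    push_neg at hcon
    obtain ⟨h1, h2⟩ := hcon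
    have hfl : ⌊u⌋ = (k : ℤ) := by
      rw [Int.floor_eq_iff]
      constructor
      · push_cast; linarith
      · push_cast; linarith
    apply hk
    rw [hj, hfl, Int.toNat_natCast]
  by_cases hjN : j ∈ Finset.range N
  · rw [Finset.sum_eq_single_of_mem j hjN (fun k _ hk => by rw [hz k hk, mul_zero])]
    rw [abs_mul, abs_of_nonneg (e00_nonneg _)]
    calc |c j| * e00 (u - j) ≤ 1 * (1/2) :=
          mul_le_mul (hc j) (e00_le_half _) (e00_nonneg _) zero_le_one
      _ = 1/2 := by ring
  · rw [Finset.sum_eq_zero (fun k hk => by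
      rw [hz k (fun h => hjN (h ▸ hk)), mul_zero])]
    norm_num

lemma abs_sum_tent_sub_le (c : ℕ → ℝ) (hc : ∀ k, |c k| ≤ 1) (N j : ℕ) (u v : ℝ)
    (hu : (j:ℝ) ≤ u) (hu' : u ≤ j+1) (hv : (j:ℝ) ≤ v) (hv' : v ≤ j+1) :
    |∑ k ∈ Finset.range N, c k * e00 (u - k) - ∑ k ∈ Finset.range N, c k * e00 (v - k)|
      ≤ |u - v| := by
  have hz : ∀ (w : ℝ), (j:ℝ) ≤ w → w ≤ j+1 → ∀ k : ℕ, k ≠ j → e00 (w - k) = 0 := by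
    intro w hw hw' k hk
    apply e00_eq_zero
    rcases lt_or_gt_of_ne hk with h | h
    · right
      have : (k:ℝ) + 1 ≤ j := by exact_mod_cast Nat.succ_le_of_lt h
      linarith
    · left
      have : (j:ℝ) + 1 ≤ k := by exact_mod_cast Nat.succ_le_of_lt h
      linarith
  rw [← Finset.sum_sub_distrib]
  have hterm : ∀ k ∈ Finset.range N, k ≠ j →
      c k * e00 (u - k) - c k * e00 (v - k) = 0 := by
    intro k _ hk
    rw [hz u hu hu' k hk, hz v hv hv' k hk]; ring
  by_cases hjN : j ∈ Finset.range N
  · rw [Finset.sum_eq_single_of_mem j hjN hterm, ← mul_sub, abs_mul]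
    calc |c j| * |e00 (u - j) - e00 (v - j)| ≤ 1 * |(u - j) - (v - j)| :=
          mul_le_mul (hc j) (e00_lip _ _) (abs_nonneg _) zero_le_one
      _ = |u - v| := by rw [one_mul]; congr 1; ring
  · rw [Finset.sum_eq_zero (fun k hk => hterm k hk (fun h => hjN (h ▸ hk)))]
    simp [abs_nonneg]

lemma tlTerm_eq (H : ℝ) (θ : ℕ → ℕ → ℝ) (m : ℕ) (t : ℝ) :
    tlTerm H θ m t = (2:ℝ) ^ (-(m:ℝ) * H) *
      ∑ k ∈ Finset.range (2^m), θ m k * e00 ((2:ℝ)^m * t - (k:ℝ)) := by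
  unfold tlTerm fs
  rw [Finset.mul_sum, Finset.mul_sum]
  refine Finset.sum_congr rfl fun k _ => ?_
  push_cast
  rw [show (2:ℝ) ^ ((m : ℝ) * (1 / 2 - H)) * (θ m k * ((2:ℝ) ^ (-(m : ℝ) / 2) * e00 ((2:ℝ) ^ m * t - (k:ℝ))))
      = ((2:ℝ) ^ ((m : ℝ) * (1 / 2 - H)) * (2:ℝ) ^ (-(m : ℝ) / 2)) * (θ m k * e00 ((2:ℝ) ^ m * t - (k:ℝ))) by ring,
    ← Real.rpow_add two_pos]
  ring_nf

lemma abs_tlTerm_le (H : ℝ) (θ : ℕ → ℕ → ℝ) (hθ : ∀ m k, |θ m k| ≤ 1) (m : ℕ) (t : ℝ) :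
    |tlTerm H θ m t| ≤ (2:ℝ) ^ (-(m:ℝ) * H) / 2 := by
  rw [tlTerm_eq, abs_mul, abs_of_nonneg (Real.rpow_nonneg (by norm_num) _)]
  calc (2:ℝ) ^ (-(m:ℝ) * H) * |∑ k ∈ Finset.range (2^m), θ m k * e00 ((2:ℝ)^m * t - (k:ℝ))|
      ≤ (2:ℝ) ^ (-(m:ℝ) * H) * (1/2) := by
        apply mul_le_mul_of_nonneg_left _ (Real.rpow_nonneg (by norm_num) _)
        exact abs_sum_tent_le (θ m) (hθ m) _ _
    _ = (2:ℝ) ^ (-(m:ℝ) * H) / 2 := by ring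

lemma abs_tlTerm_sub_le (H : ℝ) (θ : ℕ → ℕ → ℝ) (hθ : ∀ m k, |θ m k| ≤ 1)
    (m n k : ℕ) (hmn : m < n) (hk : k < 2^n) :
    |tlTerm H θ m (((k:ℝ)+1)/2^n) - tlTerm H θ m ((k:ℝ)/2^n)|
      ≤ (2:ℝ) ^ (-(m:ℝ) * H) * (2^m / 2^n) := by
  rw [tlTerm_eq, tlTerm_eq, ← mul_sub, abs_mul,
    abs_of_nonneg (Real.rpow_nonneg (by norm_num) _)]
  apply mul_le_mul_of_nonneg_left _ (Real.rpow_nonneg (by norm_num) _)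
  set d := n - m with hd
  have hnd : n = m + d := by omega
  set D := 2^d with hD
  have hDpos : 0 < D := Nat.pow_pos (by norm_num)
  set j := k / D with hj
  have h1 : j * D ≤ k := Nat.div_mul_le_self k D
  have h2 : k + 1 ≤ (j + 1) * D := (Nat.div_lt_iff_lt_mul hDpos).mp (Nat.lt_succ_self j)
  have h1' : (j:ℝ) * 2^d ≤ (k:ℝ) := by exact_mod_cast h1
  have h2' : (k:ℝ) + 1 ≤ ((j:ℝ) + 1) * 2^d := by exact_mod_cast h2
  have hpow : (2:ℝ)^n = 2^m * 2^d := by rw [hnd, pow_add]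
  have h2d : (0:ℝ) < 2^d := by positivity
  have h2n : (0:ℝ) < (2:ℝ)^n := by positivity
  have h2m : (0:ℝ) < (2:ℝ)^m := by positivity
  have hu : (2:ℝ)^m * (((k:ℝ)+1)/2^n) = ((k:ℝ)+1)/2^d := by
    rw [hpow]; field_simp
  have hv : (2:ℝ)^m * ((k:ℝ)/2^n) = (k:ℝ)/2^d := by
    rw [hpow]; field_simp
  have key := abs_sum_tent_sub_le (θ m) (hθ m) (2^m) j
    ((2:ℝ)^m * (((k:ℝ)+1)/2^n)) ((2:ℝ)^m * ((k:ℝ)/2^n)) ?_ ?_ ?_ ?_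
  · refine le_trans key (le_of_eq ?_)
    rw [hu, hv, show ((k:ℝ)+1)/2^d - (k:ℝ)/2^d = 2^m/2^n by rw [hpow]; field_simp; ring]
    rw [abs_of_pos (by positivity)]
  · rw [hu, le_div_iff₀ h2d]; linarith
  · rw [hu, div_le_iff₀ h2d]; linarith
  · rw [hv, le_div_iff₀ h2d]; linarith
  · rw [hv, div_le_iff₀ h2d]; nlinarith

lemma rpow_neg_mul (H : ℝ) (m : ℕ) : (2:ℝ) ^ (-(m:ℝ) * H) = ((2:ℝ) ^ (-H))^m := by
  rw [← Real.rpow_natCast ((2:ℝ) ^ (-H)) m, ← Real.rpow_mul (by norm_num)]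
  congr 1; ring

lemma summable_tl (H : ℝ) (hH0 : 0 < H) (θ : ℕ → ℕ → ℝ) (hθ : ∀ m k, |θ m k| ≤ 1)
    (a : ℝ) : Summable (fun m => tlTerm H θ m a) := by
  have hr0 : (0:ℝ) ≤ (2:ℝ) ^ (-H) := Real.rpow_nonneg (by norm_num) _
  have hr1 : (2:ℝ) ^ (-H) < 1 :=
    Real.rpow_lt_one_of_one_lt_of_neg one_lt_two (by linarith)
  apply Summable.of_abs
  apply Summable.of_nonneg_of_le (fun m => abs_nonneg _)
    (fun m => le_trans (abs_tlTerm_le H θ hθ m a) ?_)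
  · exact (summable_geometric_of_lt_one hr0 hr1).div_const 2
  · rw [rpow_neg_mul]

lemma increment_bd (H : ℝ) (hH0 : 0 < H) (hH1 : H < 1) (θ : ℕ → ℕ → ℝ)
    (hθ : ∀ m k, |θ m k| ≤ 1) (n k : ℕ) (hk : k < 2^n) :
    |(∑' m, tlTerm H θ m (((k:ℝ)+1)/2^n)) - ∑' m, tlTerm H θ m ((k:ℝ)/2^n)|
      ≤ (1/((2:ℝ)^(1-H)-1) + 1/(1-(2:ℝ)^(-H))) * (2:ℝ)^(-(n:ℝ)*H) := by
  set s : ℝ := (k:ℝ)/2^n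
  set s' : ℝ := ((k:ℝ)+1)/2^n
  set f : ℕ → ℝ := fun m => tlTerm H θ m s' - tlTerm H θ m s with hf
  have hs' := summable_tl H hH0 θ hθ s'
  have hs := summable_tl H hH0 θ hθ s
  have hfs : Summable f := hs'.sub hs
  have hr0 : (0:ℝ) ≤ (2:ℝ) ^ (-H) := Real.rpow_nonneg (by norm_num) _
  have hr1 : (2:ℝ) ^ (-H) < 1 :=
    Real.rpow_lt_one_of_one_lt_of_neg one_lt_two (by linarith)
  have hq1 : (1:ℝ) < (2:ℝ)^(1-H) := Real.one_lt_rpow one_lt_two (by linarith)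
  have hq0 : (0:ℝ) < (2:ℝ)^(1-H) - 1 := by linarith
  have hr1' : (0:ℝ) < 1 - (2:ℝ)^(-H) := by linarith
  have hsplit := Summable.sum_add_tsum_nat_add (f := f) n hfs
  have hdec : (∑' m, tlTerm H θ m s') - ∑' m, tlTerm H θ m s = ∑' m, f m :=
    (Summable.tsum_sub hs' hs).symm
  rw [hdec, ← hsplit]
  have head_bd : |∑ m ∈ Finset.range n, f m| ≤ 1/((2:ℝ)^(1-H)-1) * (2:ℝ)^(-(n:ℝ)*H) := by
    refine le_trans (Finset.abs_sum_le_sum_abs _ _) ?_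
    have hterm : ∀ m ∈ Finset.range n, |f m| ≤ ((2:ℝ)^(1-H))^m / (2:ℝ)^n := by
      intro m hm
      rw [Finset.mem_range] at hm
      refine le_trans (abs_tlTerm_sub_le H θ hθ m n k hm hk) (le_of_eq ?_)
      have e1 : ((2:ℝ)^(1-H))^m = (2:ℝ)^((m:ℝ)*(1-H)) := by
        rw [← Real.rpow_natCast ((2:ℝ)^(1-H)) m, ← Real.rpow_mul (by norm_num : (0:ℝ) ≤ 2)]
        congr 1; ring
      have e2 : (2:ℝ)^(-(m:ℝ)*H) * (2:ℝ)^m = (2:ℝ)^((m:ℝ)*(1-H)) := by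
        rw [← Real.rpow_natCast (2:ℝ) m, ← Real.rpow_add two_pos]; congr 1; ring
      rw [e1, ← e2]; ring
    refine le_trans (Finset.sum_le_sum hterm) ?_
    rw [← Finset.sum_div, geom_sum_eq (ne_of_gt hq1)]
    rw [div_div, div_le_iff₀ (by positivity)]
    have hnn : ((2:ℝ)^(1-H))^n = (2:ℝ)^((n:ℝ)*(1-H)) := by
      rw [← Real.rpow_natCast ((2:ℝ)^(1-H)) n, ← Real.rpow_mul (by norm_num : (0:ℝ) ≤ 2)]
      congr 1; ring
    have h2n : ((2:ℝ))^n = (2:ℝ)^((n:ℝ)) := (Real.rpow_natCast 2 n).symm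
    rw [hnn, h2n]
    have e3 : (2:ℝ)^(-(n:ℝ)*H) * (2:ℝ)^((n:ℝ)) = (2:ℝ)^((n:ℝ)*(1-H)) := by
      rw [← Real.rpow_add two_pos]; congr 1; ring
    have : (1:ℝ)/((2:ℝ)^(1-H)-1) * (2:ℝ)^(-(n:ℝ)*H) * (((2:ℝ)^(1-H) - 1) * (2:ℝ)^((n:ℝ)))
        = (2:ℝ)^((n:ℝ)*(1-H)) := by
      rw [← e3]; field_simp [ne_of_gt hq0]
    rw [this]
    linarith [Real.rpow_nonneg (by norm_num : (0:ℝ) ≤ 2) ((n:ℝ)*(1-H))]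
  have tail_bd : |∑' m, f (m + n)| ≤ 1/(1-(2:ℝ)^(-H)) * (2:ℝ)^(-(n:ℝ)*H) := by
    have hb : ∀ m : ℕ, |f (m + n)| ≤ (2:ℝ)^(-(n:ℝ)*H) * ((2:ℝ)^(-H))^m := by
      intro m
      have h1 := abs_tlTerm_le H θ hθ (m + n) s'
      have h2 := abs_tlTerm_le H θ hθ (m + n) s
      have : |f (m + n)| ≤ (2:ℝ)^(-((m:ℝ)+(n:ℝ))*H) := by
        have := abs_sub (tlTerm H θ (m+n) s') (tlTerm H θ (m+n) s)
        have hcast : (((m + n : ℕ)):ℝ) = (m:ℝ) + (n:ℝ) := by push_cast; ring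
        calc |f (m + n)| ≤ |tlTerm H θ (m+n) s'| + |tlTerm H θ (m+n) s| :=
              abs_sub _ _
          _ ≤ (2:ℝ)^(-(((m+n:ℕ)):ℝ)*H)/2 + (2:ℝ)^(-(((m+n:ℕ)):ℝ)*H)/2 := add_le_add h1 h2
          _ = (2:ℝ)^(-(((m+n:ℕ)):ℝ)*H) := by ring
          _ = (2:ℝ)^(-((m:ℝ)+(n:ℝ))*H) := by rw [hcast]
      refine le_trans this (le_of_eq ?_)
      rw [← Real.rpow_natCast ((2:ℝ)^(-H)) m, ← Real.rpow_mul (by norm_num : (0:ℝ) ≤ 2),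
        ← Real.rpow_add two_pos]
      congr 1; ring
    have hsummb : Summable (fun m => (2:ℝ)^(-(n:ℝ)*H) * ((2:ℝ)^(-H))^m) :=
      (summable_geometric_of_lt_one hr0 hr1).mul_left _
    have habs : Summable (fun m => |f (m + n)|) :=
      Summable.of_nonneg_of_le (fun m => abs_nonneg _) hb hsummb
    calc |∑' m, f (m + n)| ≤ ∑' m, |f (m + n)| := by
          simpa using norm_tsum_le_tsum_norm (f := fun m => f (m + n)) (by simpa using habs)
      _ ≤ ∑' m, (2:ℝ)^(-(n:ℝ)*H) * ((2:ℝ)^(-H))^m := Summable.tsum_le_tsum hb habs hsummb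
      _ = (2:ℝ)^(-(n:ℝ)*H) * (1 - (2:ℝ)^(-H))⁻¹ := by
          rw [tsum_mul_left, tsum_geometric_of_lt_one hr0 hr1]
      _ = 1/(1-(2:ℝ)^(-H)) * (2:ℝ)^(-(n:ℝ)*H) := by ring
  calc |∑ m ∈ Finset.range n, f m + ∑' m, f (m + n)|
      ≤ |∑ m ∈ Finset.range n, f m| + |∑' m, f (m + n)| := abs_add_le _ _
    _ ≤ 1/((2:ℝ)^(1-H)-1) * (2:ℝ)^(-(n:ℝ)*H) + 1/(1-(2:ℝ)^(-H)) * (2:ℝ)^(-(n:ℝ)*H) :=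
        add_le_add head_bd tail_bd
    _ = (1/((2:ℝ)^(1-H)-1) + 1/(1-(2:ℝ)^(-H))) * (2:ℝ)^(-(n:ℝ)*H) := by ring

theorem stmt15 (H p : ℝ) (hH : H ∈ Set.Ioo (0:ℝ) 1) (hp : 1/H < p)
    (x : ℝ → ℝ) (hx : MemX H x) (t : ℝ) (ht : t ∈ Set.Ioc (0:ℝ) 1) :
    Tendsto (fun n => dyadicSum p x n t) atTop (nhds 0) := by
  obtain ⟨hH0, hH1⟩ := hH
  obtain ⟨θ, hθsign, hxeq⟩ := hx
  have hθ : ∀ m k, |θ m k| ≤ 1 := by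
    intro m k; rcases hθsign m k with h | h <;> rw [h] <;> norm_num
  have hp0 : (0:ℝ) < p := lt_trans (by positivity) hp
  have hHp : 1 < H * p := by
    rw [div_lt_iff₀ hH0] at hp; linarith
  set C : ℝ := 1/((2:ℝ)^(1-H)-1) + 1/(1-(2:ℝ)^(-H)) with hCdef
  have hq1 : (1:ℝ) < (2:ℝ)^(1-H) := Real.one_lt_rpow one_lt_two (by linarith)
  have hr1 : (2:ℝ) ^ (-H) < 1 :=
    Real.rpow_lt_one_of_one_lt_of_neg one_lt_two (by linarith)
  have hC : 0 < C := by
    apply add_pos <;> apply div_pos one_pos <;> linarith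
  set q : ℝ := (2:ℝ)^(1 - H*p) with hqdef
  have hq0 : 0 ≤ q := Real.rpow_nonneg (by norm_num) _
  have hqlt : q < 1 := Real.rpow_lt_one_of_one_lt_of_neg one_lt_two (by linarith)
  have hnonneg : ∀ n, 0 ≤ dyadicSum p x n t := by
    intro n
    apply Finset.sum_nonneg
    intro k _
    split
    · exact Real.rpow_nonneg (abs_nonneg _) _
    · exact le_rfl
  have hbd : ∀ n, dyadicSum p x n t ≤ C^p * q^n := by
    intro n
    have hterm : ∀ k ∈ Finset.range (2^n),
        (if (k : ℝ) / 2 ^ n ≤ t then |x (((k:ℝ)+1)/2^n) - x ((k:ℝ)/2^n)| ^ p else 0)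
          ≤ (C * (2:ℝ)^(-(n:ℝ)*H)) ^ p := by
      intro k hk
      rw [Finset.mem_range] at hk
      split
      · apply Real.rpow_le_rpow (abs_nonneg _) _ (le_of_lt hp0)
        rw [hxeq, hxeq]
        exact increment_bd H hH0 hH1 θ hθ n k hk
      · exact Real.rpow_nonneg (by positivity) _
    calc dyadicSum p x n t ≤ ∑ k ∈ Finset.range (2^n), (C * (2:ℝ)^(-(n:ℝ)*H)) ^ p :=
          Finset.sum_le_sum hterm
      _ = (2:ℝ)^n * (C * (2:ℝ)^(-(n:ℝ)*H)) ^ p := by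
          rw [Finset.sum_const, Finset.card_range, nsmul_eq_mul]
          push_cast; ring
      _ = C^p * q^n := by
          rw [Real.mul_rpow (le_of_lt hC) (Real.rpow_nonneg (by norm_num) _),
            ← Real.rpow_natCast (2:ℝ) n,
            ← Real.rpow_mul (by norm_num : (0:ℝ) ≤ 2) (-(n:ℝ)*H) p,
            hqdef, ← Real.rpow_natCast ((2:ℝ)^(1-H*p)) n,
            ← Real.rpow_mul (by norm_num : (0:ℝ) ≤ 2) (1-H*p) (n:ℝ),
            show (2:ℝ)^((n:ℝ)) * (C^p * (2:ℝ)^(-(n:ℝ)*H*p))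
              = C^p * ((2:ℝ)^((n:ℝ)) * (2:ℝ)^(-(n:ℝ)*H*p)) by ring,
            ← Real.rpow_add two_pos]
          congr 2; ring
  have hlim : Tendsto (fun n : ℕ => C^p * q^n) atTop (nhds 0) := by
    have := (tendsto_pow_atTop_nhds_zero_of_lt_one hq0 hqlt).const_mul (C^p)
    simpa using this
  exact squeeze_zero hnonneg hbd hlim
end
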